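/- The homomorphism R from the Artin group ⟨x, y ∣ (xy)^n = (yx)^n⟩ to the free abelian group ℤ² sending x and y to the two standard generators is surjective, and its kernel is a free group. -/

import Mathlib

/-- The even dihedral Artin group with label `2n`:
`⟨x, y ∣ (x*y)^n = (y*x)^n⟩`, with `x = FreeGroup.of true`, `y = FreeGroup.of false`. -/
abbrev EvenDihedralArtin (n : ℕ) : Type :=
  PresentedGroup
    ({(FreeGroup.of true * FreeGroup.of false) ^ n *
        ((FreeGroup.of false * FreeGroup.of true) ^ n)⁻¹} : Set (FreeGroup Bool))

namespace EDAProof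

variable (n : ℕ)

/-- The shift automorphism of the free group on `ZMod n`. -/
def aut1 : MulAut (FreeGroup (ZMod n)) :=
  FreeGroup.freeGroupCongr (Equiv.addLeft (1 : ZMod n))

lemma aut1_of (i : ZMod n) : aut1 n (FreeGroup.of i) = FreeGroup.of (1 + i) := rfl

lemma aut1_inv_of (i : ZMod n) : (aut1 n)⁻¹ (FreeGroup.of i) = FreeGroup.of (-1 + i) := by
  rw [MulAut.inv_def, aut1, FreeGroup.freeGroupCongr_symm]
  simp [FreeGroup.freeGroupCongr]

lemma aut1_zpow (k : ℤ) (i : ZMod n) :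
    ((aut1 n) ^ k) (FreeGroup.of i) = FreeGroup.of ((k : ZMod n) + i) := by
  induction k using Int.induction_on generalizing i with
  | zero => simp
  | succ k ih =>
      rw [zpow_add_one, MulAut.mul_apply, aut1_of, ih]
      push_cast
      ring_nf
  | pred k ih =>
      rw [zpow_sub_one, MulAut.mul_apply, aut1_inv_of, ih]
      push_cast
      ring_nf

/-- The ℤ-action on the free group by shifting generators. -/
def phi : Multiplicative ℤ →* MulAut (FreeGroup (ZMod n)) :=
  zpowersHom _ (aut1 n)

/-- The concrete model `F_n ⋊ ℤ`. -/
abbrev HH := SemidirectProduct (FreeGroup (ZMod n)) (Multiplicative ℤ) (phi n)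

lemma phi_of (g : Multiplicative ℤ) (i : ZMod n) :
    phi n g (FreeGroup.of i) = FreeGroup.of ((g.toAdd : ZMod n) + i) := by
  rw [phi, zpowersHom_apply, aut1_zpow]

/-- Generators of the Artin group. -/
def X : EvenDihedralArtin n := PresentedGroup.of true

def Y : EvenDihedralArtin n := PresentedGroup.of false

lemma relA : (X n * Y n) ^ n = (Y n * X n) ^ n := by
  have h : (PresentedGroup.mk _ ((FreeGroup.of true * FreeGroup.of false) ^ n *
      ((FreeGroup.of false * FreeGroup.of true) ^ n)⁻¹) : EvenDihedralArtin n) = 1 := by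
    apply (QuotientGroup.eq_one_iff _).mpr
    exact Subgroup.subset_normalClosure (Set.mem_singleton _)
  rw [map_mul, map_inv, map_pow, map_pow, map_mul, map_mul, mul_inv_eq_one] at h
  exact h

lemma comm_z_X : Commute ((X n * Y n) ^ n) (X n) := by
  have h : SemiconjBy (X n) (Y n * X n) (X n * Y n) := by
    unfold SemiconjBy; group
  have h2 := h.pow_right n
  unfold Commute SemiconjBy
  calc (X n * Y n) ^ n * X n = X n * (Y n * X n) ^ n := h2.symm
    _ = X n * (X n * Y n) ^ n := by rw [relA]

/-- `C m = a^m x a^{-m}` where `a = xy`. -/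
def C (m : ℤ) : EvenDihedralArtin n := (X n * Y n) ^ m * X n * (X n * Y n) ^ (-m)

lemma comm_zz_X (t : ℤ) : Commute ((X n * Y n) ^ ((n : ℤ) * t)) (X n) := by
  rw [zpow_mul, zpow_natCast]
  exact (comm_z_X n).zpow_left t

lemma C_periodic (m m' : ℤ) (h : (m : ZMod n) = (m' : ZMod n)) : C n m = C n m' := by
  have hd : (n : ℤ) ∣ m' - m := ((ZMod.intCast_eq_intCast_iff m m' n).mp h).dvd
  obtain ⟨t, ht⟩ := hd
  have hm' : m' = m + (n : ℤ) * t := by linarith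
  subst hm'
  have hc := (comm_zz_X n t).eq
  unfold C
  have : (X n * Y n) ^ (m + (n : ℤ) * t) * X n =
      (X n * Y n) ^ m * X n * (X n * Y n) ^ ((n : ℤ) * t) := by
    rw [zpow_add, mul_assoc, hc, mul_assoc]
  rw [this]
  group

def f1 : FreeGroup (ZMod n) →* EvenDihedralArtin n :=
  FreeGroup.lift fun i => C n (i.val : ℤ)

def f2 : Multiplicative ℤ →* EvenDihedralArtin n :=
  zpowersHom _ (X n * Y n)

lemma compat [NeZero n] : ∀ g, (f1 n).comp ((phi n g)).toMonoidHom =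
    (MulAut.conj (f2 n g)).toMonoidHom.comp (f1 n) := by
  intro g
  apply FreeGroup.ext_hom
  intro i
  have hval : ∀ j : ZMod n, ((j.val : ℕ) : ZMod n) = j := fun j =>
    ZMod.natCast_rightInverse j
  simp only [MonoidHom.comp_apply, MulEquiv.coe_toMonoidHom, phi_of, f1, FreeGroup.lift_apply_of,
    MulAut.conj_apply, f2, zpowersHom_apply]
  have h1 : C n ((((g.toAdd : ZMod n) + i).val : ℕ) : ℤ) = C n (g.toAdd + (i.val : ℤ)) := by
    apply C_periodic
    push_cast
    rw [hval, hval]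
  rw [h1]
  unfold C
  group

/-- The map `H → A`. -/
def psi [NeZero n] : HH n →* EvenDihedralArtin n :=
  SemidirectProduct.lift (f1 n) (f2 n) (compat n)

/-- Image of the generators in `H`. -/
def fB : Bool → HH n := fun b =>
  match b with
  | true => SemidirectProduct.inl (FreeGroup.of (0 : ZMod n))
  | false => (SemidirectProduct.inl (FreeGroup.of (0 : ZMod n)))⁻¹ *
      SemidirectProduct.inr (Multiplicative.ofAdd 1)

lemma tele (m : ℕ) :
    ((⟨(FreeGroup.of (0 : ZMod n))⁻¹ * FreeGroup.of ((1 : ℤ) : ZMod n),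
        Multiplicative.ofAdd (1 : ℤ)⟩ : HH n)) ^ m =
      ⟨(FreeGroup.of (0 : ZMod n))⁻¹ * FreeGroup.of ((m : ℤ) : ZMod n),
        Multiplicative.ofAdd (m : ℤ)⟩ := by
  induction m with
  | zero =>
      ext
      · simp
      · simp
  | succ m ih =>
      rw [pow_succ, ih]
      ext
      · simp only [SemidirectProduct.mul_left, phi_of, map_mul, map_inv, toAdd_ofAdd]
        rw [add_zero]
        have : ((m : ℤ) : ZMod n) + ((1 : ℤ) : ZMod n) = (((m + 1 : ℕ) : ℤ) : ZMod n) := by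
          push_cast; ring
        rw [← this]
        group
      · simp only [SemidirectProduct.mul_right, ← ofAdd_add]
        norm_num

lemma relH : ∀ r ∈ ({(FreeGroup.of true * FreeGroup.of false) ^ n *
    ((FreeGroup.of false * FreeGroup.of true) ^ n)⁻¹} : Set (FreeGroup Bool)),
    FreeGroup.lift (fB n) r = 1 := by
  intro r hr
  rw [Set.mem_singleton_iff] at hr
  subst hr
  rw [map_mul, map_inv, map_pow, map_pow, map_mul, map_mul, mul_inv_eq_one]
  have hxy : FreeGroup.lift (fB n) (FreeGroup.of true) * FreeGroup.lift (fB n) (FreeGroup.of false)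
      = SemidirectProduct.inr (Multiplicative.ofAdd 1) := by
    simp only [FreeGroup.lift_apply_of, fB]
    group
  have hyx : FreeGroup.lift (fB n) (FreeGroup.of false) * FreeGroup.lift (fB n) (FreeGroup.of true)
      = (⟨(FreeGroup.of (0 : ZMod n))⁻¹ * FreeGroup.of ((1 : ℤ) : ZMod n),
          Multiplicative.ofAdd (1 : ℤ)⟩ : HH n) := by
    simp only [FreeGroup.lift_apply_of, fB]
    ext
    · simp [SemidirectProduct.mul_left, phi_of]
    · simp [SemidirectProduct.mul_right]
  have h0 : (((n : ℕ) : ℤ) : ZMod n) = 0 := by push_cast; simp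
  have hpow : (SemidirectProduct.inr (Multiplicative.ofAdd 1) : HH n) ^ n =
      SemidirectProduct.inr (Multiplicative.ofAdd (n : ℤ)) := by
    rw [← map_pow]
    congr 1
    rw [← ofAdd_nsmul]
    norm_num
  rw [hxy, hyx, tele, h0, hpow]
  ext
  · simp
  · simp

/-- The map `A → H`. -/
def theta : EvenDihedralArtin n →* HH n := PresentedGroup.toGroup (relH n)

lemma theta_X : theta n (X n) = SemidirectProduct.inl (FreeGroup.of (0 : ZMod n)) :=
  PresentedGroup.toGroup.of _

lemma theta_Y : theta n (Y n) = (SemidirectProduct.inl (FreeGroup.of (0 : ZMod n)))⁻¹ *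
    SemidirectProduct.inr (Multiplicative.ofAdd 1) :=
  PresentedGroup.toGroup.of _

lemma psi_theta [NeZero n] : (psi n).comp (theta n) = MonoidHom.id _ := by
  apply PresentedGroup.ext
  intro b
  cases b
  · -- false : Y
    show psi n (theta n (Y n)) = Y n
    rw [theta_Y, map_mul, map_inv]
    simp only [psi, SemidirectProduct.lift_inl, SemidirectProduct.lift_inr, f1,
      FreeGroup.lift_apply_of, f2, zpowersHom_apply, toAdd_ofAdd, zpow_one]
    rw [ZMod.val_zero]
    unfold C
    group
  · show psi n (theta n (X n)) = X n
    rw [theta_X]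
    simp only [psi, SemidirectProduct.lift_inl, f1, FreeGroup.lift_apply_of]
    rw [ZMod.val_zero]
    unfold C
    group

lemma theta_inj [NeZero n] : Function.Injective (theta n) := by
  intro a b h
  have := congrArg (psi n) h
  have ha := DFunLike.congr_fun (psi_theta n) a
  have hb := DFunLike.congr_fun (psi_theta n) b
  simp only [MonoidHom.comp_apply, MonoidHom.id_apply] at ha hb
  rw [ha, hb] at this
  exact this

end EDAProof

open EDAProof in
/-- The homomorphism `R` from the Artin group `⟨x, y ∣ (xy)^n = (yx)^n⟩` to the
free abelian group `ℤ²` sending `x` and `y` to the two standard generators is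
surjective, and its kernel is a free group. -/
theorem evenDihedralArtin_to_zsq_surjective_and_ker_free (n : ℕ) (hn : 1 ≤ n)
    (R : EvenDihedralArtin n →* Multiplicative (ℤ × ℤ))
    (hx : R (PresentedGroup.of true) = Multiplicative.ofAdd (1, 0))
    (hy : R (PresentedGroup.of false) = Multiplicative.ofAdd (0, 1)) :
    Function.Surjective R ∧ IsFreeGroup R.ker := by
  haveI : NeZero n := ⟨by omega⟩
  constructor
  · -- surjectivity
    intro g
    refine ⟨(X n) ^ (g.toAdd.1) * (Y n) ^ (g.toAdd.2), ?_⟩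
    rw [map_mul, map_zpow, map_zpow]
    show (R (PresentedGroup.of true)) ^ g.toAdd.1 * (R (PresentedGroup.of false)) ^ g.toAdd.2 = g
    rw [hx, hy, ← ofAdd_zsmul, ← ofAdd_zsmul, ← ofAdd_add]
    simp [Prod.smul_mk, smul_eq_mul]
  · -- kernel is free
    -- the second coordinate of `R` agrees with `rightHom ∘ theta`
    have track : (SemidirectProduct.rightHom.comp (theta n)) =
        (MonoidHom.mk' (fun p : Multiplicative (ℤ × ℤ) => Multiplicative.ofAdd p.toAdd.2)
          (fun a b => rfl)).comp R := by
      apply PresentedGroup.ext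
      intro b
      cases b
      · show SemidirectProduct.rightHom (theta n (Y n)) = _
        rw [theta_Y, map_mul, map_inv]
        simp only [SemidirectProduct.rightHom_inl, SemidirectProduct.rightHom_inr,
          MonoidHom.comp_apply, MonoidHom.mk'_apply]
        rw [hy]
        simp
      · show SemidirectProduct.rightHom (theta n (X n)) = _
        rw [theta_X]
        simp only [SemidirectProduct.rightHom_inl, MonoidHom.comp_apply, MonoidHom.mk'_apply]
        rw [hx]
        simp
    have hright : ∀ g : EvenDihedralArtin n, g ∈ R.ker → (theta n g).right = 1 := by
      intro g hg
      have := DFunLike.congr_fun track g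
      simp only [MonoidHom.comp_apply] at this
      rw [MonoidHom.mem_ker.mp hg] at this
      simpa [SemidirectProduct.rightHom] using this
    -- the embedding of the kernel into the free group
    let j : R.ker →* FreeGroup (ZMod n) :=
      { toFun := fun g => (theta n g.1).left
        map_one' := by simp
        map_mul' := by
          intro a b
          show (theta n (a.1 * b.1)).left = _
          rw [map_mul, SemidirectProduct.mul_left, hright a.1 a.2]
          simp }
    have jinj : Function.Injective j := by
      intro a b h
      apply Subtype.ext
      apply theta_inj n
      apply SemidirectProduct.ext
      · exact h
      · rw [hright a.1 a.2, hright b.1 b.2]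
    exact IsFreeGroup.ofMulEquiv (MonoidHom.ofInjective jinj).symm
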